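/- arXiv:1502.07736 — 2 statements merged into one kernel-verified Lean document; each statement's English description precedes it below -/
import Mathlib

section
/- For every finite graph G there exist two disjoint sets of vertices U, W ⊆ V(G) with |U| = |W| such that G has no edges between U and W and the induced subgraph of G on V(G) \ (U ∪ W) has a Hamilton path (where by convention the empty graph and a one-vertex graph have a Hamilton path). -/
open SimpleGraph

namespace MonoCyclePartitions

variable {V : Type*}

/-- `conCount H l x y` is the number of paths of length `l + 1` (equivalently, with `l`
internal vertices) between `x` and `y` in the graph `H`. -/
noncomputable def conCount (H : SimpleGraph V) (l : ℕ) (x y : V) : ℕ :=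
  Nat.card {p : H.Walk x y // p.IsPath ∧ p.length = l + 1}

/-- The bipartite graph consisting of the edges of `H` with one end in `X` and the other in `Y`. -/
def between (H : SimpleGraph V) (X Y : Set V) : SimpleGraph V where
  Adj u v := H.Adj u v ∧ ((u ∈ X ∧ v ∈ Y) ∨ (u ∈ Y ∧ v ∈ X))
  symm := ⟨fun u v h => ⟨h.1.symm, by tauto⟩⟩
  loopless := ⟨fun v h => H.irrefl h.1⟩

/-- A subgraph `F` of a graph `G` on `n` vertices is `(α, k)`-strongly robust if there is a
positive integer `l ≤ k` such that every two vertices of `F` are joined by at least `α * n ^ l`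
paths of length `l + 1` in `F`. -/
def StronglyRobust [Fintype V] {G : SimpleGraph V} (F : G.Subgraph) (α : ℝ) (k : ℕ) : Prop :=
  ∃ l : ℕ, 1 ≤ l ∧ l ≤ k ∧ ∀ x ∈ F.verts, ∀ y ∈ F.verts,
    α * (Fintype.card V : ℝ) ^ l ≤ (conCount F.spanningCoe l x y : ℝ)

/-- `F` is `(α, k)`-weakly robust, witnessed by the bipartition `{X, Y}` of its vertex set. -/
def WeaklyRobustWith [Fintype V] {G : SimpleGraph V} (F : G.Subgraph) (X Y : Set V)
    (α : ℝ) (k : ℕ) : Prop :=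
  X ∪ Y = F.verts ∧ Disjoint X Y ∧
  ∃ l : ℕ, 1 ≤ l ∧ l ≤ k ∧ ∀ x ∈ X, ∀ y ∈ Y,
    α * (Fintype.card V : ℝ) ^ l ≤ (conCount (between F.spanningCoe X Y) l x y : ℝ)

def WeaklyRobust [Fintype V] {G : SimpleGraph V} (F : G.Subgraph) (α : ℝ) (k : ℕ) : Prop :=
  ∃ X Y : Set V, WeaklyRobustWith F X Y α k

def Robust [Fintype V] {G : SimpleGraph V} (F : G.Subgraph) (α : ℝ) (k : ℕ) : Prop :=
  StronglyRobust F α k ∨ WeaklyRobust F α k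

/-- `F` is a subgraph of the graph `H` (as graphs on the same vertex type). -/
def SubgraphOf {G : SimpleGraph V} (F : G.Subgraph) (H : SimpleGraph V) : Prop :=
  ∀ ⦃u v⦄, F.Adj u v → H.Adj u v

/-- The subgraph of `G` consisting of the edges of `H` (that lie in `G`) inside the set `S`;
when `H ≤ G` this is the graph `H` restricted to `S`, viewed as a subgraph of `G`. -/
def restrictSubgraph (G H : SimpleGraph V) (S : Set V) : G.Subgraph where
  verts := S
  Adj u v := H.Adj u v ∧ G.Adj u v ∧ u ∈ S ∧ v ∈ S
  adj_sub h := h.2.1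
  edge_vert h := h.2.2.1
  symm := ⟨fun u v h => ⟨h.1.symm, h.2.1.symm, h.2.2.2, h.2.2.1⟩⟩

/-- The graph `H` restricted to `S` has a Hamilton cycle, where by convention the empty set,
a single vertex and an edge count as (degenerate) cycles. -/
def HasDegenHamCycleOn [DecidableEq V] (H : SimpleGraph V) (S : Set V) : Prop :=
  S = ∅ ∨ (∃ v, S = {v}) ∨ (∃ u v, H.Adj u v ∧ S = {u, v}) ∨
    ∃ (x : S) (c : (H.induce S).Walk x x), c.IsHamiltonianCycle

/-- The vertex set can be partitioned into a cycle of `GR` and a cycle of `GB`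
(allowing degenerate cycles). -/
def RedBlueCyclePartition [DecidableEq V] (GR GB : SimpleGraph V) : Prop :=
  ∃ VR VB : Set V, Disjoint VR VB ∧ VR ∪ VB = Set.univ ∧
    HasDegenHamCycleOn GR VR ∧ HasDegenHamCycleOn GB VB

/-- The induced subgraph of `H` on `S` has a Hamilton path (with the convention that the
empty graph and one-vertex graphs have one). -/
def HasHamPathOn [DecidableEq V] (H : SimpleGraph V) (S : Set V) : Prop :=
  S = ∅ ∨ ∃ (a b : S) (p : (H.induce S).Walk a b), p.IsHamiltonian

/-- The number of neighbours of `v` in `A`, in the graph `H`. -/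
noncomputable def degIn (H : SimpleGraph V) (v : V) (A : Set V) : ℕ :=
  (H.neighborSet v ∩ A).ncard

/-- The degree of `v` in the graph `H`. -/
noncomputable def deg (H : SimpleGraph V) (v : V) : ℕ :=
  (H.neighborSet v).ncard

/-- The number of edges of `H` with one end in `A` and the other in `B`. -/
noncomputable def edgesBetween (H : SimpleGraph V) (A B : Set V) : ℕ :=
  {e ∈ H.edgeSet | ∃ u v, u ∈ A ∧ v ∈ B ∧ e = s(u, v)}.ncard

/-- The number of edges of `H` with both ends in `A`. -/
noncomputable def edgesWithin (H : SimpleGraph V) (A : Set V) : ℕ :=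
  {e ∈ H.edgeSet | ∀ v ∈ e, v ∈ A}.ncard

/-- `A` is an independent set of `H`. -/
def IsIndep (H : SimpleGraph V) (A : Set V) : Prop :=
  ∀ u ∈ A, ∀ v ∈ A, ¬ H.Adj u v

/-- The set of vertices with a neighbour in `A`. -/
def NSet (H : SimpleGraph V) (A : Set V) : Set V :=
  {v | ∃ u ∈ A, H.Adj u v}

/-- `H` is 2-connected: it is connected, has at least 3 vertices, and stays connected after
deleting any single vertex. -/
def TwoConnected [Fintype V] (H : SimpleGraph V) : Prop :=
  H.Connected ∧ 3 ≤ Fintype.card V ∧ ∀ v : V, (H.induce ({v}ᶜ : Set V)).Connected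


lemma walk_of_chain {V : Type*} [DecidableEq V] (G : SimpleGraph V) (S : Set V) :
    ∀ (l : List V) (a : V) (ha : a ∈ S), (∀ x ∈ l, x ∈ S) → l.Chain G.Adj a →
    ∃ (b : V) (hb : b ∈ S) (p : (G.induce S).Walk ⟨a, ha⟩ ⟨b, hb⟩),
      p.support.map Subtype.val = a :: l
  | [], a, ha, _, _ => ⟨a, ha, Walk.nil, rfl⟩
  | c :: l, a, ha, hmem, hch => by
      obtain ⟨hac, hcl⟩ := List.chain_cons.mp hch
      obtain ⟨b, hb, p, hp⟩ := walk_of_chain G S l c (hmem c (.head _))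
        (fun x hx => hmem x (.tail _ hx)) hcl
      have hadj' : (G.induce S).Adj ⟨a, ha⟩ ⟨c, hmem c (.head _)⟩ := hac
      exact ⟨b, hb, Walk.cons hadj' p, by
        rw [Walk.support_cons, List.map_cons, hp]⟩

lemma dfs {V : Type*} [Fintype V] [DecidableEq V] (G : SimpleGraph V) :
    ∀ (n : ℕ) (U W : Finset V) (stack : List V),
    2 * U.card + stack.length ≤ n →
    (∀ v : V, v ∈ U ∨ v ∈ W ∨ v ∈ stack) →
    (∀ v ∈ U, v ∉ W ∧ v ∉ stack) →
    (∀ v ∈ W, v ∉ stack) →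
    stack.Nodup →
    stack.Chain' G.Adj →
    (∀ u ∈ U, ∀ w ∈ W, ¬ G.Adj u w) →
    W.card ≤ U.card →
    ∃ (U' W' : Finset V) (stack' : List V),
      (∀ v : V, v ∈ U' ∨ v ∈ W' ∨ v ∈ stack') ∧
      (∀ v ∈ U', v ∉ W' ∧ v ∉ stack') ∧
      (∀ v ∈ W', v ∉ stack') ∧
      stack'.Nodup ∧ stack'.Chain' G.Adj ∧
      (∀ u ∈ U', ∀ w ∈ W', ¬ G.Adj u w) ∧
      U'.card = W'.card := by
  intro n
  induction n with
  | zero =>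
    intro U W stack hmeas hcov hU hW hnd hch hadj hle
    have hU0 : U.card = 0 := by omega
    have : W.card = 0 := by omega
    exact ⟨U, W, stack, hcov, hU, hW, hnd, hch, hadj, by omega⟩
  | succ n ih =>
    intro U W stack hmeas hcov hU hW hnd hch hadj hle
    rcases eq_or_lt_of_le hle with heq | hlt
    · exact ⟨U, W, stack, hcov, hU, hW, hnd, hch, hadj, heq.symm⟩
    match stack, hnd, hch with
    | [], _, _ =>
      -- push a fresh vertex onto the empty stack
      have hUne : U.Nonempty := Finset.card_pos.mp (by omega)
      obtain ⟨u, hu⟩ := hUne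
      refine ih (U.erase u) W [u] ?_ ?_ ?_ ?_ ?_ ?_ ?_ ?_
      · have := Finset.card_erase_of_mem hu
        simp only [this, List.length_singleton]
        omega
      · intro v
        rcases hcov v with h | h | h
        · by_cases hv : v = u
          · exact Or.inr (Or.inr (by simp [hv]))
          · exact Or.inl (Finset.mem_erase.mpr ⟨hv, h⟩)
        · exact Or.inr (Or.inl h)
        · simp at h
      · intro v hv
        have hv' := Finset.mem_of_mem_erase hv
        refine ⟨(hU v hv').1, ?_⟩
        simp [Finset.ne_of_mem_erase hv]
      · intro v hv
        simp only [List.mem_singleton]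
        intro h; exact (hU u hu).1 (h ▸ hv)
      · simp
      · exact List.isChain_singleton u
      · intro a ha w hw; exact hadj a (Finset.mem_of_mem_erase ha) w hw
      · have := Finset.card_erase_of_mem hu; omega
    | v :: rest, hnd, hch =>
      by_cases hnbr : ∃ u ∈ U, G.Adj v u
      · -- push a neighbour of the top
        obtain ⟨u, hu, huv⟩ := hnbr
        refine ih (U.erase u) W (u :: v :: rest) ?_ ?_ ?_ ?_ ?_ ?_ ?_ ?_
        · have := Finset.card_erase_of_mem hu
          simp only [List.length_cons] at hmeas ⊢
          omega
        · intro x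
          rcases hcov x with h | h | h
          · by_cases hx : x = u
            · exact Or.inr (Or.inr (by simp [hx]))
            · exact Or.inl (Finset.mem_erase.mpr ⟨hx, h⟩)
          · exact Or.inr (Or.inl h)
          · exact Or.inr (Or.inr (List.mem_cons_of_mem _ h))
        · intro x hx
          have hx' := Finset.mem_of_mem_erase hx
          refine ⟨(hU x hx').1, ?_⟩
          simp only [List.mem_cons, not_or]
          exact ⟨Finset.ne_of_mem_erase hx, fun h => (hU x hx').2 (by simp [h]),
            fun h => (hU x hx').2 (by simp [h])⟩
        · intro w hw
          simp only [List.mem_cons, not_or]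
          refine ⟨fun h => (hU u hu).1 (h ▸ hw), ?_, ?_⟩
          · intro h; exact hW w hw (by simp [h])
          · intro h; exact hW w hw (by simp [h])
        · refine List.nodup_cons.mpr ⟨?_, hnd⟩
          exact (hU u hu).2
        · exact List.IsChain.cons_cons huv.symm hch
        · intro a ha w hw; exact hadj a (Finset.mem_of_mem_erase ha) w hw
        · have := Finset.card_erase_of_mem hu; omega
      · -- pop the top into W
        push_neg at hnbr
        refine ih U (insert v W) rest ?_ ?_ ?_ ?_ ?_ ?_ ?_ ?_
        · simp only [List.length_cons] at hmeas; omega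
        · intro x
          rcases hcov x with h | h | h
          · exact Or.inl h
          · exact Or.inr (Or.inl (Finset.mem_insert_of_mem h))
          · rcases List.mem_cons.mp h with h | h
            · exact Or.inr (Or.inl (Finset.mem_insert.mpr (Or.inl h)))
            · exact Or.inr (Or.inr h)
        · intro x hx
          refine ⟨?_, fun h => (hU x hx).2 (List.mem_cons_of_mem _ h)⟩
          intro h
          rcases Finset.mem_insert.mp h with h | h
          · exact (hU x hx).2 (by simp [h])
          · exact (hU x hx).1 h
        · intro w hw
          rcases Finset.mem_insert.mp hw with h | h
          · subst h; exact (List.nodup_cons.mp hnd).1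
          · exact fun hm => hW w h (List.mem_cons_of_mem _ hm)
        · exact (List.nodup_cons.mp hnd).2
        · exact hch.tail
        · intro a ha w hw
          rcases Finset.mem_insert.mp hw with h | h
          · subst h; exact fun hadj' => hnbr a ha hadj'.symm
          · exact hadj a ha w h
        · have hv : v ∉ W := by
            intro h
            exact hW v h (by simp)
          rw [Finset.card_insert_of_notMem hv]
          omega

theorem statement_5 {V : Type*} [Fintype V] [DecidableEq V] (G : SimpleGraph V) :
    ∃ U W : Set V, Disjoint U W ∧ U.ncard = W.ncard ∧
      (∀ u ∈ U, ∀ w ∈ W, ¬ G.Adj u w) ∧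
      HasHamPathOn G ((U ∪ W)ᶜ) := by
  obtain ⟨U', W', stack, hcov, hU, hW, hnd, hch, hadj, hcard⟩ :=
    dfs G (2 * (Finset.univ : Finset V).card) Finset.univ ∅ []
      (by simp) (by simp) (by simp) (by simp) (by simp) List.isChain_nil (by simp) (by simp)
  refine ⟨(U' : Set V), (W' : Set V), ?_, ?_, ?_, ?_⟩
  · rw [Set.disjoint_left]
    intro a ha hb
    exact (hU a ha).1 hb
  · simp [Set.ncard_coe_finset, hcard]
  · intro u hu w hw; exact hadj u hu w hw
  · have hS : ∀ v : V, v ∈ (((U' : Set V) ∪ (W' : Set V))ᶜ : Set V) ↔ v ∈ stack := by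
      intro v
      constructor
      · intro hv
        simp only [Set.mem_compl_iff, Set.mem_union, Finset.mem_coe, not_or] at hv
        rcases hcov v with h | h | h
        · exact absurd h hv.1
        · exact absurd h hv.2
        · exact h
      · intro hv
        simp only [Set.mem_compl_iff, Set.mem_union, Finset.mem_coe, not_or]
        exact ⟨fun h => (hU v h).2 hv, fun h => hW v h hv⟩
    match stack, hS, hnd, hch with
    | [], hS, _, _ =>
      left
      ext v
      simp only [Set.mem_empty_iff_false, iff_false]
      intro hv
      simpa using (hS v).mp hv
    | a :: rest, hS, hnd, hch =>
      right
      have ha : a ∈ (((U' : Set V) ∪ (W' : Set V))ᶜ : Set V) := (hS a).mpr (by simp)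
      have hmem : ∀ x ∈ rest, x ∈ (((U' : Set V) ∪ (W' : Set V))ᶜ : Set V) :=
        fun x hx => (hS x).mpr (List.mem_cons_of_mem _ hx)
      obtain ⟨b, hb, p, hp⟩ := walk_of_chain G _ rest a ha hmem hch
      refine ⟨⟨a, ha⟩, ⟨b, hb⟩, p, ?_⟩
      intro v
      have h1 : p.support.count v = (p.support.map Subtype.val).count (v : V) :=
        (List.count_map_of_injective _ _ Subtype.val_injective _).symm
      refine (Eq.trans (by congr 1; exact lawful_beq_subsingleton _ _) h1).trans ?_
      rw [hp]
      have hvmem : (v : V) ∈ a :: rest := (hS v).mp v.2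
      exact List.count_eq_one_of_mem hnd hvmem

end MonoCyclePartitions
end

section
/- Let 0 < eps < 1/4 and let G be a balanced bipartite graph on n vertices with bipartition {X1, X2} (so |X1| = |X2| = n/2) with minimum degree delta(G) >= (1/4 - eps)*n. Then either G contains a perfect matching, or there exist subsets A1 ⊆ X1 and A2 ⊆ X2 with (1/4 - eps)*n <= |A1|, |A2| <= (1/4 + eps)*n such that G has no edges between A1 and A2. -/
open SimpleGraph

namespace MonoCyclePartitions

variable {V : Type*}

theorem statement_9 (eps : ℝ) (heps0 : 0 < eps) (heps1 : eps < 1 / 4)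
    (n : ℕ) (G : SimpleGraph (Fin n)) (X1 X2 : Set (Fin n))
    (hdisj : Disjoint X1 X2) (hcover : X1 ∪ X2 = Set.univ) (hbal : X1.ncard = X2.ncard)
    (hbip : ∀ u v, G.Adj u v → (u ∈ X1 ∧ v ∈ X2) ∨ (u ∈ X2 ∧ v ∈ X1))
    (hdeg : ∀ v, (1 / 4 - eps) * n ≤ (deg G v : ℝ)) :
    (∃ M : G.Subgraph, M.IsPerfectMatching) ∨
      ∃ A1 ⊆ X1, ∃ A2 ⊆ X2,
        (1 / 4 - eps) * n ≤ (A1.ncard : ℝ) ∧ (A1.ncard : ℝ) ≤ (1 / 4 + eps) * n ∧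
        (1 / 4 - eps) * n ≤ (A2.ncard : ℝ) ∧ (A2.ncard : ℝ) ≤ (1 / 4 + eps) * n ∧
        ∀ u ∈ A1, ∀ v ∈ A2, ¬ G.Adj u v := by
  classical
  have hsum : X1.ncard + X2.ncard = n := by
    rw [← Set.ncard_union_eq hdisj (Set.toFinite _) (Set.toFinite _), hcover, Set.ncard_univ]
    simp
  by_cases hex : ∃ f : ↥X1 → ↥X2, Function.Injective f ∧ ∀ x : ↥X1, G.Adj ↑x ↑(f x)
  · -- Hall's condition holds: build a perfect matching
    left
    obtain ⟨f, hfinj, hfr⟩ := hex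
    have hcard : Fintype.card ↥X1 = Fintype.card ↥X2 := by
      rw [← Nat.card_eq_fintype_card, ← Nat.card_eq_fintype_card,
        Nat.card_coe_set_eq, Nat.card_coe_set_eq, hbal]
    have hfbij : Function.Bijective f :=
      (Fintype.bijective_iff_injective_and_card f).mpr ⟨hfinj, hcard⟩
    refine ⟨{ verts := Set.univ
              Adj := fun u v => (∃ (hu : u ∈ X1) (hv : v ∈ X2), f ⟨u, hu⟩ = ⟨v, hv⟩) ∨
                     (∃ (hv : v ∈ X1) (hu : u ∈ X2), f ⟨v, hv⟩ = ⟨u, hu⟩)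
              adj_sub := ?_
              edge_vert := fun _ => Set.mem_univ _
              symm := ⟨fun u v h => by
                rcases h with ⟨hu, hv, he⟩ | ⟨hv, hu, he⟩
                · exact Or.inr ⟨hu, hv, he⟩
                · exact Or.inl ⟨hv, hu, he⟩⟩ }, ?_, fun v => Set.mem_univ v⟩
    · rintro u v (⟨hu, hv, hfe⟩ | ⟨hv, hu, hfe⟩)
      · have := hfr ⟨u, hu⟩
        rwa [hfe] at this
      · have := hfr ⟨v, hv⟩
        rw [hfe] at this
        exact this.symm
    · intro v _
      have hv : v ∈ X1 ∪ X2 := hcover ▸ Set.mem_univ v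
      rcases hv with hv1 | hv2
      · refine ⟨(f ⟨v, hv1⟩ : Fin n), Or.inl ⟨hv1, (f ⟨v, hv1⟩).2, rfl⟩, ?_⟩
        rintro w (⟨hu, hw, hfe⟩ | ⟨hw, hu, hfe⟩)
        · rw [show (⟨v, hu⟩ : ↥X1) = ⟨v, hv1⟩ from rfl] at hfe
          exact congrArg Subtype.val hfe.symm
        · exact absurd hu (Set.disjoint_left.mp hdisj hv1)
      · obtain ⟨a, ha⟩ := hfbij.2 ⟨v, hv2⟩
        refine ⟨(a : Fin n), Or.inr ⟨a.2, hv2, by rw [Subtype.coe_eta, ha]⟩, ?_⟩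
        rintro w (⟨hu, hw, hfe⟩ | ⟨hw, hu, hfe⟩)
        · exact (Set.disjoint_left.mp hdisj hu hv2).elim
        · have : f ⟨w, hw⟩ = f a := by rw [ha]; exact Subtype.ext (congrArg Subtype.val hfe)
          exact congrArg Subtype.val (hfinj this)
  · -- Hall fails: produce the independent pair
    right
    have h := mt (Fintype.all_card_le_filter_rel_iff_exists_injective
      (fun (a : ↥X1) (b : ↥X2) => G.Adj ↑a ↑b)).mp hex
    push_neg at h
    obtain ⟨A, hA⟩ := h
    set S : Set (Fin n) := Subtype.val '' (↑A : Set ↥X1) with hS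
    set N : Set (Fin n) := {v ∈ X2 | ∃ u ∈ S, G.Adj u v} with hNdef
    have hSsub : S ⊆ X1 := by rintro _ ⟨a, _, rfl⟩; exact a.2
    have hNsub : N ⊆ X2 := fun v hv => hv.1
    have hScard : S.ncard = A.card := by
      rw [hS, Set.ncard_image_of_injective _ Subtype.val_injective, Set.ncard_coe_finset]
    have hNeq : N = Subtype.val ''
        (↑({b | ∃ a ∈ A, G.Adj ↑a ↑b} : Finset ↥X2) : Set ↥X2) := by
      ext v
      constructor
      · rintro ⟨hv2, u, ⟨a, haA, rfl⟩, hadj⟩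
        exact ⟨⟨v, hv2⟩, Finset.mem_coe.mpr (Finset.mem_filter.mpr
          ⟨Finset.mem_univ _, ⟨a, Finset.mem_coe.mp haA, hadj⟩⟩), rfl⟩
      · rintro ⟨b, hb, rfl⟩
        obtain ⟨-, a, haA, hadj⟩ := Finset.mem_filter.mp (Finset.mem_coe.mp hb)
        exact ⟨b.2, a, ⟨a, haA, rfl⟩, hadj⟩
    have hNcard : N.ncard < S.ncard := by
      rw [hScard, hNeq, Set.ncard_image_of_injective _ Subtype.val_injective,
        Set.ncard_coe_finset]
      exact hA
    -- neighbors of vertices in S lie in N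
    have hnbS : ∀ u ∈ S, G.neighborSet u ⊆ N := by
      intro u hu v hv
      rcases hbip u v hv with ⟨hu1, hv2⟩ | ⟨hu2, _⟩
      · exact ⟨hv2, u, hu, hv⟩
      · exact absurd hu2 (Set.disjoint_left.mp hdisj (hSsub hu))
    have hSne : S.Nonempty := by
      rw [← Set.ncard_pos (Set.toFinite _)]
      omega
    obtain ⟨u0, hu0⟩ := hSne
    have hNlb : (1 / 4 - eps) * n ≤ (N.ncard : ℝ) := by
      refine le_trans (hdeg u0) ?_
      have : deg G u0 ≤ N.ncard :=
        Set.ncard_le_ncard (hnbS u0 hu0) (Set.toFinite _)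
      exact_mod_cast this
    have hSX1 : S.ncard ≤ X1.ncard := Set.ncard_le_ncard hSsub (Set.toFinite _)
    -- A2
    have hA2card : (X2 \ N).ncard = X2.ncard - N.ncard := Set.ncard_diff hNsub (Set.toFinite _)
    have hA2ne : (X2 \ N).Nonempty := by
      rw [← Set.ncard_pos (Set.toFinite _), hA2card]
      omega
    obtain ⟨v0, hv0⟩ := hA2ne
    have hnbv0 : G.neighborSet v0 ⊆ X1 \ S := by
      intro w hw
      rcases hbip v0 w hw with ⟨hv1, _⟩ | ⟨_, hw1⟩
      · exact absurd hv1 (Set.disjoint_right.mp hdisj hv0.1)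
      · refine ⟨hw1, fun hwS => hv0.2 ⟨hv0.1, w, hwS, hw.symm⟩⟩
    have hub : (1 / 4 - eps) * n ≤ ((X1 \ S).ncard : ℝ) := by
      refine le_trans (hdeg v0) ?_
      have : deg G v0 ≤ (X1 \ S).ncard :=
        Set.ncard_le_ncard hnbv0 (Set.toFinite _)
      exact_mod_cast this
    have hX1Scard : (X1 \ S).ncard = X1.ncard - S.ncard := Set.ncard_diff hSsub (Set.toFinite _)
    -- real arithmetic
    have hNX2 : N.ncard ≤ X2.ncard := Set.ncard_le_ncard hNsub (Set.toFinite _)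
    have hx2 : (X1.ncard : ℝ) + (X2.ncard : ℝ) = n := by exact_mod_cast hsum
    have hbR : (X1.ncard : ℝ) = (X2.ncard : ℝ) := by exact_mod_cast hbal
    have hcast1 : ((X1 \ S).ncard : ℝ) = (X1.ncard : ℝ) - (S.ncard : ℝ) := by
      rw [hX1Scard]; exact Nat.cast_sub hSX1
    have hcast2 : ((X2 \ N).ncard : ℝ) = (X2.ncard : ℝ) - (N.ncard : ℝ) := by
      rw [hA2card]; exact Nat.cast_sub hNX2
    have hltR : (N.ncard : ℝ) < (S.ncard : ℝ) := by exact_mod_cast hNcard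
    refine ⟨S, hSsub, X2 \ N, Set.diff_subset, ?_, ?_, ?_, ?_, ?_⟩
    · linarith
    · rw [hcast1] at hub; linarith
    · rw [hcast1] at hub; rw [hcast2]; linarith
    · rw [hcast2]; linarith
    · intro u huS v hvA2 hadj
      rcases hbip u v hadj with ⟨_, hv2⟩ | ⟨hu2, _⟩
      · exact hvA2.2 ⟨hv2, u, huS, hadj⟩
      · exact absurd hu2 (Set.disjoint_left.mp hdisj (hSsub huS))


end MonoCyclePartitions
end
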